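/- For a group G and G-module A, the formulas ((i,i+1)σ)(g_1,...,g_n) = -σ(g_1,...,g_{i-1}g_i, g_i^{-1}, g_i g_{i+1},...,g_n) (with the first factor acted on by g_1 when i=1, and the last entry replaced by g_n^{-1} when i=n) define an action of the symmetric group Σ_{n+1} on the set C^n(G,A) of functions G^n → A. In particular, the square of each generator (i,i+1) acts as the identity. -/

import Mathlib

variable {G A : Type} [Group G] [AddCommGroup A] [DistribMulAction G A]

/-- The action of the transposition `(i, i+1)` of `Σ_{n+1}` (here `i = j+1` is 1-indexed,
`j : Fin n` is its 0-indexed version) on the `n`-cochains `C^n(G,A)`: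
`((1,2)σ)(g₁,…,gₙ) = -g₁ • σ(g₁⁻¹, g₁g₂, g₃,…,gₙ)`,
`((i,i+1)σ)(g₁,…,gₙ) = -σ(g₁,…,g_{i-1}gᵢ, gᵢ⁻¹, gᵢg_{i+1},…,gₙ)` for `1 < i < n`,
`((n,n+1)σ)(g₁,…,gₙ) = -σ(g₁,…,g_{n-1}gₙ, gₙ⁻¹)`. -/
def Tact (n : ℕ) (j : Fin n) (σ : (Fin n → G) → A) : (Fin n → G) → A :=
  fun g =>
    let g' : Fin n → G := fun i =>
      if (i : ℕ) + 1 = (j : ℕ) then g i * g j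
      else if i = j then (g j)⁻¹
      else if (i : ℕ) = (j : ℕ) + 1 then g j * g i
      else g i
    if (j : ℕ) = 0 then -(g j • σ g') else -(σ g')

/-- Telescoping of partial products. -/
lemma partialProd_twist {n : ℕ} (g : Fin n → G) (π : Equiv.Perm (Fin (n + 1)))
    (k : Fin (n + 1)) :
    Fin.partialProd
      (fun i => (Fin.partialProd g (π i.castSucc))⁻¹ * Fin.partialProd g (π i.succ)) k
      = (Fin.partialProd g (π 0))⁻¹ * Fin.partialProd g (π k) := by
  induction k using Fin.induction with
  | zero => simp
  | succ i ih =>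
    rw [Fin.partialProd_succ, ih]
    group

/-- The action of the full symmetric group on cochains, via "homogeneous" coordinates. -/
def rhoAux (n : ℕ) (π : Equiv.Perm (Fin (n + 1))) : Function.End ((Fin n → G) → A) :=
  fun σ g =>
    (Equiv.Perm.sign π : ℤ) •
      (Fin.partialProd g (π 0) •
        σ (fun i => (Fin.partialProd g (π i.castSucc))⁻¹ * Fin.partialProd g (π i.succ)))

lemma rhoAux_one (n : ℕ) : rhoAux (G := G) (A := A) n 1 = 1 := by
  funext σ g
  simp only [rhoAux, Equiv.Perm.sign_one, Equiv.Perm.one_apply, Units.val_one, one_zsmul]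
  have h0 : Fin.partialProd g (0 : Fin (n + 1)) = 1 := Fin.partialProd_zero g
  rw [h0, one_smul]
  have : (fun i : Fin n =>
      (Fin.partialProd g i.castSucc)⁻¹ * Fin.partialProd g i.succ) = g := by
    funext i
    rw [Fin.partialProd_succ]
    group
  rw [this]
  rfl

lemma rhoAux_mul (n : ℕ) (π τ : Equiv.Perm (Fin (n + 1))) :
    rhoAux (G := G) (A := A) n (π * τ) = rhoAux n π * rhoAux n τ := by
  funext σ g
  change rhoAux n (π * τ) σ g = rhoAux n π (rhoAux n τ σ) g
  simp only [rhoAux, Equiv.Perm.mul_apply]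
  rw [partialProd_twist]
  have harg : (fun i : Fin n =>
      (Fin.partialProd (fun i => (Fin.partialProd g (π i.castSucc))⁻¹ *
          Fin.partialProd g (π i.succ)) (τ i.castSucc))⁻¹ *
        Fin.partialProd (fun i => (Fin.partialProd g (π i.castSucc))⁻¹ *
          Fin.partialProd g (π i.succ)) (τ i.succ)) =
      (fun i : Fin n => (Fin.partialProd g (π (τ i.castSucc)))⁻¹ *
        Fin.partialProd g (π (τ i.succ))) := by
    funext i
    rw [partialProd_twist, partialProd_twist]
    group
  rw [harg]
  rw [smul_comm (Fin.partialProd g (π 0)) ((Equiv.Perm.sign τ : ℤ))]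
  rw [smul_smul, ← mul_smul, Equiv.Perm.sign_mul, Units.val_mul, mul_inv_cancel_left]

/-- The symmetric group action as a monoid hom. -/
def rho (n : ℕ) : Equiv.Perm (Fin (n + 1)) →* Function.End ((Fin n → G) → A) where
  toFun := rhoAux n
  map_one' := rhoAux_one n
  map_mul' := rhoAux_mul n

lemma rho_swap (n : ℕ) (j : Fin n) :
    rho (G := G) (A := A) n (Equiv.swap j.castSucc j.succ) = Tact n j := by
  funext σ g
  have hne : j.castSucc ≠ j.succ := (Fin.castSucc_lt_succ : j.castSucc < j.succ).ne
  change rhoAux n (Equiv.swap j.castSucc j.succ) σ g = Tact n j σ g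
  simp only [rhoAux]
  rw [Equiv.Perm.sign_swap hne]
  set s := Equiv.swap j.castSucc j.succ with hs
  -- the inner arguments agree
  have harg : (fun i : Fin n =>
      (Fin.partialProd g (s i.castSucc))⁻¹ * Fin.partialProd g (s i.succ)) =
      (fun i : Fin n =>
        if (i : ℕ) + 1 = (j : ℕ) then g i * g j
        else if i = j then (g j)⁻¹
        else if (i : ℕ) = (j : ℕ) + 1 then g j * g i
        else g i) := by
    funext i
    by_cases h1 : (i : ℕ) + 1 = (j : ℕ)
    · -- i.succ = j.castSucc, i.castSucc untouched
      have hsucc : i.succ = j.castSucc := by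
        apply Fin.ext; simpa using h1
      have hcs1 : i.castSucc ≠ j.castSucc := by
        intro h; apply Fin.ext_iff.mp at h; simp at h; omega
      have hcs2 : i.castSucc ≠ j.succ := by
        intro h; apply Fin.ext_iff.mp at h; simp at h; omega
      rw [if_pos h1, hs, hsucc, Equiv.swap_apply_left, Equiv.swap_apply_of_ne_of_ne hcs1 hcs2]
      have : Fin.partialProd g j.succ = Fin.partialProd g j.castSucc * g j :=
        Fin.partialProd_succ g j
      rw [this, ← hsucc, Fin.partialProd_succ]
      group
    · rw [if_neg h1]
      by_cases h2 : i = j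
      · subst h2
        rw [if_pos rfl, hs, Equiv.swap_apply_left, Equiv.swap_apply_right,
          Fin.partialProd_succ]
        group
      · rw [if_neg h2]
        by_cases h3 : (i : ℕ) = (j : ℕ) + 1
        · -- i.castSucc = j.succ, i.succ untouched
          have hcs : i.castSucc = j.succ := by
            apply Fin.ext; simpa using h3
          have hs1 : i.succ ≠ j.castSucc := by
            intro h; apply Fin.ext_iff.mp at h; simp at h; omega
          have hs2 : i.succ ≠ j.succ := by
            intro h; apply Fin.ext_iff.mp at h; simp at h; omega
          rw [if_pos h3, hs, hcs, Equiv.swap_apply_right,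
            Equiv.swap_apply_of_ne_of_ne hs1 hs2]
          have h4 : Fin.partialProd g i.succ = Fin.partialProd g i.castSucc * g i :=
            Fin.partialProd_succ g i
          rw [h4, hcs, Fin.partialProd_succ]
          group
        · have hij : (i : ℕ) ≠ (j : ℕ) := fun h => h2 (Fin.ext h)
          have hcs1 : i.castSucc ≠ j.castSucc := by
            intro h; apply Fin.ext_iff.mp at h; simp at h; omega
          have hcs2 : i.castSucc ≠ j.succ := by
            intro h; apply Fin.ext_iff.mp at h; simp at h; omega
          have hsu1 : i.succ ≠ j.castSucc := by
            intro h; apply Fin.ext_iff.mp at h; simp at h; omega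
          have hsu2 : i.succ ≠ j.succ := by
            intro h; apply Fin.ext_iff.mp at h; simp at h; omega
          rw [if_neg h3, hs, Equiv.swap_apply_of_ne_of_ne hcs1 hcs2,
            Equiv.swap_apply_of_ne_of_ne hsu1 hsu2, Fin.partialProd_succ]
          group
  rw [harg]
  simp only [Units.val_neg, Units.val_one, neg_smul, one_zsmul, Tact]
  by_cases hj : (j : ℕ) = 0
  · rw [if_pos hj]
    have h0 : (0 : Fin (n + 1)) = j.castSucc := by
      apply Fin.ext; simp [hj]
    have : s 0 = j.succ := by rw [h0, hs, Equiv.swap_apply_left]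
    rw [this]
    have : Fin.partialProd g j.succ = g j := by
      rw [Fin.partialProd_succ, ← h0, Fin.partialProd_zero, one_mul]
    rw [this]
  · rw [if_neg hj]
    have h1 : (0 : Fin (n + 1)) ≠ j.castSucc := by
      intro h; apply Fin.ext_iff.mp at h; simp at h; omega
    have h2 : (0 : Fin (n + 1)) ≠ j.succ := by
      intro h; apply Fin.ext_iff.mp at h; simp at h
    rw [hs, Equiv.swap_apply_of_ne_of_ne h1 h2, Fin.partialProd_zero, one_smul]

/-- The formulas for the transpositions `(i,i+1)` define an action of the symmetric group
`Σ_{n+1}` on `C^n(G,A)`; in particular the square of each generator acts as the identity. -/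
theorem symmetric_group_action_on_cochains (n : ℕ) :
    (∀ j : Fin n, Tact (G := G) (A := A) n j ∘ Tact n j = id) ∧
    ∃ ρ : Equiv.Perm (Fin (n + 1)) →* Function.End ((Fin n → G) → A),
      ∀ j : Fin n, ρ (Equiv.swap j.castSucc j.succ) = Tact n j := by
  refine ⟨?_, ⟨rho n, fun j => rho_swap n j⟩⟩
  intro j
  have h := rho_swap (G := G) (A := A) n j
  calc id (α := Function.End ((Fin n → G) → A)) (Tact (G := G) (A := A) n j ∘ Tact n j)
      = rho n (Equiv.swap j.castSucc j.succ) * rho n (Equiv.swap j.castSucc j.succ) := by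
        rw [h]; rfl
    _ = rho (G := G) (A := A) n (Equiv.swap j.castSucc j.succ * Equiv.swap j.castSucc j.succ) := by
        rw [map_mul]
    _ = rho (G := G) (A := A) n 1 := by rw [Equiv.swap_mul_self]
    _ = id (α := Function.End ((Fin n → G) → A)) id := by rw [map_one]; rfl
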